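/- Let f : H → ℝ be convex and differentiable with L-Lipschitz gradient (L > 0). Then ∇f is (1/L)-cocoercive: ⟨∇f(x) − ∇f(y), x − y⟩ ≥ (1/L)‖∇f(x) − ∇f(y)‖² for all x, y ∈ H (Baillon–Haddad). -/

import Mathlib

open RealInnerProductSpace

-- derivative of line composition
lemma line_hasDerivAt
    {H : Type*} [NormedAddCommGroup H] [InnerProductSpace ℝ H] [CompleteSpace H]
    (f : H → ℝ) (f' : H → H) (hdiff : ∀ x, HasGradientAt f (f' x) x)
    (x v : H) (t : ℝ) :
    HasDerivAt (fun s : ℝ => f (x + s • v)) ⟪f' (x + t • v), v⟫ t := by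
  have hline : HasDerivAt (fun s : ℝ => x + s • v) v t := by
    simpa using ((hasDerivAt_id t).smul_const v).const_add x
  have h := (hdiff (x + t • v)).hasFDerivAt.comp_hasDerivAt t hline
  simpa [InnerProductSpace.toDual_apply_apply, Function.comp_def] using h

-- Lemma 1: gradient inequality for convex function
lemma grad_ineq
    {H : Type*} [NormedAddCommGroup H] [InnerProductSpace ℝ H] [CompleteSpace H]
    (f : H → ℝ) (f' : H → H)
    (hconv : ConvexOn ℝ Set.univ f)
    (hdiff : ∀ x, HasGradientAt f (f' x) x)
    (x y : H) : f x + ⟪f' x, y - x⟫ ≤ f y := by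
  set v := y - x with hv
  have hφ : HasDerivAt (fun s : ℝ => f (x + s • v)) ⟪f' (x + (0:ℝ) • v), v⟫ 0 :=
    line_hasDerivAt f f' hdiff x v 0
  rw [show x + (0:ℝ) • v = x by simp] at hφ
  have hslope := hasDerivAt_iff_tendsto_slope.1 hφ
  have hslope' : Filter.Tendsto (slope (fun s : ℝ => f (x + s • v)) 0)
      (nhdsWithin 0 (Set.Ioi 0)) (nhds ⟪f' x, v⟫) :=
    hslope.mono_left (nhdsWithin_mono _ (fun t ht => ne_of_gt ht))
  have hbound : ∀ᶠ t in nhdsWithin (0:ℝ) (Set.Ioi 0),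
      slope (fun s : ℝ => f (x + s • v)) 0 t ≤ f y - f x := by
    filter_upwards [Ioo_mem_nhdsGT_of_mem (by norm_num : (0:ℝ) ∈ Set.Ico 0 1)] with t ht
    have ht0 : 0 < t := ht.1
    have ht1 : t < 1 := ht.2
    have hcomb : f (x + t • v) ≤ (1 - t) * f x + t * f y := by
      have := hconv.2 (Set.mem_univ x) (Set.mem_univ y) (by linarith : (0:ℝ) ≤ 1 - t)
        (le_of_lt ht0) (by ring)
      have hpt : (1 - t) • x + t • y = x + t • v := by
        rw [hv]; module
      rwa [hpt] at this
    rw [slope_def_field]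
    simp only [zero_smul, add_zero, sub_zero]
    rw [div_le_iff₀ ht0]
    nlinarith [hcomb]
  have := le_of_tendsto hslope' hbound
  linarith [this]

-- Lemma 2: descent lemma
lemma descent_lemma
    {H : Type*} [NormedAddCommGroup H] [InnerProductSpace ℝ H] [CompleteSpace H]
    (f : H → ℝ) (f' : H → H) (L : ℝ) (hL : 0 < L)
    (hdiff : ∀ x, HasGradientAt f (f' x) x)
    (hlip : ∀ x y, ‖f' x - f' y‖ ≤ L * ‖x - y‖)
    (x y : H) : f y ≤ f x + ⟪f' x, y - x⟫ + L / 2 * ‖y - x‖ ^ 2 := by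
  set v := y - x with hv
  set ψ : ℝ → ℝ := fun t => f (x + t • v) - t * ⟪f' x, v⟫ - L / 2 * t ^ 2 * ‖v‖ ^ 2 with hψ
  have hψd : ∀ t : ℝ, HasDerivAt ψ
      (⟪f' (x + t • v), v⟫ - ⟪f' x, v⟫ - L * t * ‖v‖ ^ 2) t := by
    intro t
    have h1 := line_hasDerivAt f f' hdiff x v t
    have h2 : HasDerivAt (fun t : ℝ => t * ⟪f' x, v⟫) ⟪f' x, v⟫ t := by
      simpa using (hasDerivAt_id t).mul_const ⟪f' x, v⟫
    have h3 : HasDerivAt (fun t : ℝ => L / 2 * t ^ 2 * ‖v‖ ^ 2) (L * t * ‖v‖ ^ 2) t := by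
      have h := ((hasDerivAt_pow 2 t).const_mul (L / 2)).mul_const (‖v‖ ^ 2)
      norm_num at h
      exact h.congr_deriv (by ring)
    exact (h1.sub h2).sub h3
  have hderiv_nonpos : ∀ t ∈ Set.Ioi (0:ℝ),
      ⟪f' (x + t • v), v⟫ - ⟪f' x, v⟫ - L * t * ‖v‖ ^ 2 ≤ 0 := by
    intro t ht
    have ht0 : 0 < t := ht
    have h1 : ⟪f' (x + t • v), v⟫ - ⟪f' x, v⟫ = ⟪f' (x + t • v) - f' x, v⟫ := by
      rw [inner_sub_left]
    have h2 : ⟪f' (x + t • v) - f' x, v⟫ ≤ ‖f' (x + t • v) - f' x‖ * ‖v‖ :=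
      real_inner_le_norm _ _
    have h3 : ‖f' (x + t • v) - f' x‖ ≤ L * (t * ‖v‖) := by
      have := hlip (x + t • v) x
      simpa [norm_smul, abs_of_pos ht0] using this
    have hnv : (0:ℝ) ≤ ‖v‖ := norm_nonneg _
    nlinarith [mul_le_mul_of_nonneg_right h3 hnv]
  -- ψ antitone on [0,1]
  have hcont : ContinuousOn ψ (Set.Icc 0 1) :=
    fun t _ => ((hψd t).continuousAt).continuousWithinAt
  have hdiffOn : ∀ t ∈ interior (Set.Icc (0:ℝ) 1), HasDerivAt ψ
      (⟪f' (x + t • v), v⟫ - ⟪f' x, v⟫ - L * t * ‖v‖ ^ 2) t := fun t _ => hψd t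
  have hanti : AntitoneOn ψ (Set.Icc 0 1) := by
    apply antitoneOn_of_deriv_nonpos (convex_Icc 0 1) hcont
    · intro t ht
      exact (hψd t).differentiableAt.differentiableWithinAt
    · intro t ht
      rw [interior_Icc] at ht
      rw [(hψd t).deriv]
      exact hderiv_nonpos t ht.1
  have h10 := hanti (Set.mem_Icc.2 ⟨le_refl 0, by norm_num⟩)
    (Set.mem_Icc.2 ⟨by norm_num, le_refl 1⟩) (by norm_num)
  simp only [hψ] at h10
  simp only [one_smul, zero_smul, add_zero, one_pow, zero_pow, one_mul, zero_mul,
    mul_zero, sub_zero] at h10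
  have hxy : x + v = y := by rw [hv]; abel
  rw [hxy] at h10
  linarith

-- Lemma 3: improved lower bound
lemma lower_bound
    {H : Type*} [NormedAddCommGroup H] [InnerProductSpace ℝ H] [CompleteSpace H]
    (f : H → ℝ) (f' : H → H) (L : ℝ) (hL : 0 < L)
    (hconv : ConvexOn ℝ Set.univ f)
    (hdiff : ∀ x, HasGradientAt f (f' x) x)
    (hlip : ∀ x y, ‖f' x - f' y‖ ≤ L * ‖x - y‖)
    (x y : H) :
    f x + ⟪f' x, y - x⟫ + 1 / (2 * L) * ‖f' y - f' x‖ ^ 2 ≤ f y := by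
  set d := f' y - f' x with hd
  set z := y - (1 / L) • d with hz
  have h1 : f x + ⟪f' x, z - x⟫ ≤ f z := grad_ineq f f' hconv hdiff x z
  have h2 : f z ≤ f y + ⟪f' y, z - y⟫ + L / 2 * ‖z - y‖ ^ 2 :=
    descent_lemma f f' L hL hdiff hlip y z
  have hzy : z - y = -((1 / L) • d) := by rw [hz]; abel
  have hnorm : ‖z - y‖ ^ 2 = (1 / L) ^ 2 * ‖d‖ ^ 2 := by
    rw [hzy, norm_neg, norm_smul]
    rw [Real.norm_eq_abs, abs_of_pos (by positivity : (0:ℝ) < 1 / L)]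
    ring
  have hinner2 : ⟪f' y, z - y⟫ = -(1 / L) * ⟪f' y, d⟫ := by
    rw [hzy, inner_neg_right, real_inner_smul_right]; ring
  have hinner1 : ⟪f' x, z - x⟫ = ⟪f' x, y - x⟫ - (1 / L) * ⟪f' x, d⟫ := by
    have : z - x = (y - x) - (1 / L) • d := by rw [hz]; abel
    rw [this, inner_sub_right, real_inner_smul_right]
  have hdd : ⟪f' y, d⟫ - ⟪f' x, d⟫ = ‖d‖ ^ 2 := by
    rw [hd, ← inner_sub_left, real_inner_self_eq_norm_sq]
  have hL' : (0:ℝ) < 1 / L := by positivity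
  have key : f x + (⟪f' x, y - x⟫ - (1 / L) * ⟪f' x, d⟫) ≤
      f y - (1/L) * ⟪f' y, d⟫ + L / 2 * ((1/L)^2 * ‖d‖^2) := by
    rw [← hinner1]
    calc f x + ⟪f' x, z - x⟫ ≤ f z := h1
      _ ≤ f y + ⟪f' y, z - y⟫ + L / 2 * ‖z - y‖ ^ 2 := h2
      _ = f y - (1/L) * ⟪f' y, d⟫ + L / 2 * ((1/L)^2 * ‖d‖^2) := by
          rw [hinner2, hnorm]; ring
  have hLne : L ≠ 0 := ne_of_gt hL
  have : f x + ⟪f' x, y - x⟫ + (1/L) * (⟪f' y, d⟫ - ⟪f' x, d⟫)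
      - L / 2 * ((1/L)^2 * ‖d‖^2) ≤ f y := by linarith
  rw [hdd] at this
  have heq : (1/L) * ‖d‖^2 - L / 2 * ((1/L)^2 * ‖d‖^2) = 1 / (2*L) * ‖d‖^2 := by
    field_simp; ring
  linarith

/-- Baillon–Haddad: a convex differentiable function with
L-Lipschitz gradient has (1/L)-cocoercive gradient. -/
theorem baillon_haddad
    {H : Type*} [NormedAddCommGroup H] [InnerProductSpace ℝ H] [CompleteSpace H]
    (f : H → ℝ) (f' : H → H) (L : ℝ) (hL : 0 < L)
    (hconv : ConvexOn ℝ Set.univ f)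
    (hdiff : ∀ x, HasGradientAt f (f' x) x)
    (hlip : ∀ x y, ‖f' x - f' y‖ ≤ L * ‖x - y‖) :
    ∀ x y, ⟪f' x - f' y, x - y⟫ ≥ (1 / L) * ‖f' x - f' y‖ ^ 2 := by
  intro x y
  have h1 := lower_bound f f' L hL hconv hdiff hlip x y
  have h2 := lower_bound f f' L hL hconv hdiff hlip y x
  have hs : ⟪f' x, y - x⟫ + ⟪f' y, x - y⟫ = -⟪f' x - f' y, x - y⟫ := by
    rw [inner_sub_left, show (y - x : H) = -(x - y) by abel, inner_neg_right]
    ring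
  have hn : ‖f' x - f' y‖ = ‖f' y - f' x‖ := by rw [← norm_neg]; congr 1; abel
  have hsum : ⟪f' x, y - x⟫ + ⟪f' y, x - y⟫ + 1/L * ‖f' x - f' y‖^2 ≤ 0 := by
    rw [hn]
    have : 1 / (2*L) * ‖f' y - f' x‖^2 + 1 / (2*L) * ‖f' x - f' y‖^2
        = 1/L * ‖f' y - f' x‖^2 := by rw [hn]; field_simp; ring
    linarith
  rw [hs] at hsum
  linarith
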